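/- Let h : ℝⁿ → ℝ be continuously differentiable, let γ > 0 and ρ ∈ [0,1), and let u : ℝⁿ → ℝᵐ be a continuous feedback such that for all x ∈ ℝⁿ, L_f h(x) + L_g h(x)·u(x) + γ·sign(h(x))·|h(x)|^ρ ≥ 0. Then for every closed-loop trajectory x(·) with initial condition x₀ = x(0), setting T = |h(x₀)|^{1−ρ}/(γ(1−ρ)), one has h(x(t)) ≥ 0 for all t ≥ T; in particular the trajectory reaches the set Γ = {x ∈ ℝⁿ : h(x) ≥ 0} by time T and remains in Γ for all t ≥ T. -/

import Mathlib

/-- The sign function: 1 if positive, -1 if negative, 0 at 0. -/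
noncomputable def sgn (z : ℝ) : ℝ := if 0 < z then 1 else if z < 0 then -1 else 0

/-- Finite time convergence control barrier function (Proposition III.1 of Li et al.):
if `h` is continuously differentiable, `γ > 0`, `ρ ∈ [0,1)`, and the continuous feedback `u`
satisfies `L_f h(x) + L_g h(x)·u(x) + γ·sign(h(x))·|h(x)|^ρ ≥ 0` for all `x`, then every
closed-loop trajectory satisfies `h(x(t)) ≥ 0` for all `t ≥ T` with
`T = |h(x₀)|^{1-ρ}/(γ(1-ρ))`. -/
theorem fcbf_finite_time_reachability {n m : ℕ}
    (f : (Fin n → ℝ) → (Fin n → ℝ))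
    (g : (Fin n → ℝ) → (Fin n → Fin m → ℝ))
    (hf : LocallyLipschitz f) (hg : LocallyLipschitz g)
    (h : (Fin n → ℝ) → ℝ) (hC1 : ContDiff ℝ 1 h)
    (γ ρ : ℝ) (hγ : 0 < γ) (hρ0 : 0 ≤ ρ) (hρ1 : ρ < 1)
    (u : (Fin n → ℝ) → (Fin m → ℝ)) (hu : Continuous u)
    (hcbf : ∀ x : Fin n → ℝ,
      fderiv ℝ h x (f x) + fderiv ℝ h x (fun i => ∑ j, g x i j * u x j)
        + γ * sgn (h x) * |h x| ^ ρ ≥ 0)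
    (x : ℝ → (Fin n → ℝ))
    (hx : ∀ t ≥ (0:ℝ),
      HasDerivAt x (f (x t) + fun i => ∑ j, g (x t) i j * u (x t) j) t)
    (T : ℝ) (hT : T = |h (x 0)| ^ (1 - ρ) / (γ * (1 - ρ))) :
    ∀ t ≥ T, 0 ≤ h (x t) := by
  set y : ℝ → ℝ := fun t => h (x t) with hy_def
  set d : ℝ → ℝ := fun t =>
    fderiv ℝ h (x t) (f (x t) + fun i => ∑ j, g (x t) i j * u (x t) j) with hd_def
  have hρ1' : (0:ℝ) < 1 - ρ := by linarith
  -- y has derivative d on [0,∞)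
  have hy : ∀ t ≥ (0:ℝ), HasDerivAt y (d t) t := by
    intro t ht
    exact ((hC1.differentiable one_ne_zero).differentiableAt.hasFDerivAt).comp_hasDerivAt t (hx t ht)
  -- continuity of y on [0,∞)
  have hycont : ∀ s t : ℝ, 0 ≤ s → ContinuousOn y (Set.Icc s t) := by
    intro s t hs r hr
    exact ((hy r (le_trans hs hr.1)).continuousAt).continuousWithinAt
  -- the differential inequality
  have hineq : ∀ t ≥ (0:ℝ), d t ≥ -(γ * sgn (y t) * |y t| ^ ρ) := by
    intro t ht
    have := hcbf (x t)
    have hmap : d t = fderiv ℝ h (x t) (f (x t))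
        + fderiv ℝ h (x t) (fun i => ∑ j, g (x t) i j * u (x t) j) := by
      simp [hd_def, map_add]
    rw [hmap]
    linarith [this]
  -- when y t < 0 we have d t ≥ γ * (-(y t)) ^ ρ
  have hneg : ∀ t ≥ (0:ℝ), y t < 0 → γ * (-(y t)) ^ ρ ≤ d t := by
    intro t ht hyt
    have h1 := hineq t ht
    have hsgn : sgn (y t) = -1 := by
      simp only [sgn, if_neg (not_lt.mpr hyt.le), if_pos hyt]
    rw [hsgn, abs_of_neg hyt] at h1
    linarith
  -- Invariance: once nonnegative, stays nonnegative
  have hinv : ∀ s ≥ (0:ℝ), 0 ≤ y s → ∀ t ≥ s, 0 ≤ y t := by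
    intro s hs hys t hts
    by_contra hneg'
    push_neg at hneg'
    have hst : s < t := by
      rcases lt_or_eq_of_le hts with h' | h'
      · exact h'
      · exfalso; rw [← h'] at hneg'; linarith
    set S : Set ℝ := Set.Icc s t ∩ y ⁻¹' Set.Ici 0 with hS_def
    have hSclosed : IsClosed S :=
      (hycont s t hs).preimage_isClosed_of_isClosed isClosed_Icc isClosed_Ici
    have hSne : S.Nonempty := ⟨s, ⟨le_rfl, hts⟩, hys⟩
    have hSbdd : BddAbove S := ⟨t, fun r hr => hr.1.2⟩
    set s₀ := sSup S with hs₀_def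
    have hs₀mem : s₀ ∈ S := hSclosed.csSup_mem hSne hSbdd
    have hs₀le : s₀ ≤ t := hs₀mem.1.2
    have hs₀ge : s ≤ s₀ := hs₀mem.1.1
    have hys₀ : 0 ≤ y s₀ := hs₀mem.2
    have hs₀lt : s₀ < t := by
      rcases lt_or_eq_of_le hs₀le with h' | h'
      · exact h'
      · exfalso; rw [h'] at hys₀; linarith
    have hltneg : ∀ r, s₀ < r → r ≤ t → y r < 0 := by
      intro r hr1 hr2
      by_contra hge
      push_neg at hge
      have : r ∈ S := ⟨⟨le_trans hs₀ge hr1.le, hr2⟩, hge⟩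
      exact absurd (le_csSup hSbdd this) (not_le.mpr hr1)
    have hmono : StrictMonoOn y (Set.Icc s₀ t) := by
      apply strictMonoOn_of_deriv_pos (convex_Icc s₀ t)
      · exact hycont s₀ t (le_trans hs hs₀ge)
      · intro r hr
        rw [interior_Icc] at hr
        have hr0 : (0:ℝ) ≤ r := le_trans (le_trans hs hs₀ge) hr.1.le
        rw [(hy r hr0).deriv]
        have hyr : y r < 0 := hltneg r hr.1 hr.2.le
        have := hneg r hr0 hyr
        have hpos : 0 < γ * (-(y r)) ^ ρ :=
          mul_pos hγ (Real.rpow_pos_of_pos (by linarith) ρ)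
        linarith
    have := hmono ⟨le_rfl, hs₀le⟩ ⟨hs₀le, le_rfl⟩ hs₀lt
    linarith
  -- T is nonnegative
  have hTnn : 0 ≤ T := by
    rw [hT]
    exact div_nonneg (Real.rpow_nonneg (abs_nonneg _) _) (by positivity)
  intro t ht
  -- Case: y 0 ≥ 0
  rcases le_or_gt 0 (y 0) with h0 | h0
  · exact hinv 0 le_rfl h0 t (le_trans hTnn ht)
  -- Case: y 0 < 0. Show ∃ s ∈ [0,T] with y s ≥ 0, then use invariance.
  · have hfind : ∃ s ∈ Set.Icc (0:ℝ) T, 0 ≤ y s := by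
      by_contra hall
      push_neg at hall
      have hallneg : ∀ s ∈ Set.Icc (0:ℝ) T, y s < 0 := hall
      -- consider w r = (-(y r))^(1-ρ) + γ(1-ρ) r, antitone on [0,T]
      set w : ℝ → ℝ := fun r => (-(y r)) ^ (1 - ρ) + γ * (1 - ρ) * r with hw_def
      have hwderiv : ∀ r ∈ Set.Ioo (0:ℝ) T,
          HasDerivAt w ((1 - ρ) * (-(y r)) ^ (1 - ρ - 1) * (-(d r)) + γ * (1 - ρ)) r := by
        intro r hr
        have hr0 : (0:ℝ) ≤ r := hr.1.le
        have hyr : y r < 0 := hallneg r ⟨hr0, hr.2.le⟩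
        have h1 : HasDerivAt (fun r => -(y r)) (-(d r)) r := (hy r hr0).neg
        have h2 : HasDerivAt (fun r => (-(y r)) ^ (1 - ρ))
            ((1 - ρ) * (-(y r)) ^ (1 - ρ - 1) * (-(d r))) r := by
          have := h1.rpow_const (p := 1 - ρ) (Or.inl (by linarith : -(y r) ≠ 0))
          convert this using 1
          ring
        have h3 : HasDerivAt (fun r : ℝ => γ * (1 - ρ) * r) (γ * (1 - ρ)) r := by
          simpa using (hasDerivAt_id r).const_mul (γ * (1 - ρ))
        exact h2.add h3
      have hwanti : AntitoneOn w (Set.Icc 0 T) := by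
        apply antitoneOn_of_deriv_nonpos (convex_Icc 0 T)
        · apply ContinuousOn.add
          · exact ((hycont 0 T le_rfl).neg).rpow_const
              (fun r hr => Or.inl (by have := hallneg r hr; rw [Pi.neg_apply]; linarith))
          · exact (continuous_const.mul continuous_id).continuousOn
        · intro r hr
          rw [interior_Icc] at hr
          exact (hwderiv r hr).differentiableAt.differentiableWithinAt
        · intro r hr
          rw [interior_Icc] at hr
          rw [(hwderiv r hr).deriv]
          have hr0 : (0:ℝ) ≤ r := hr.1.le
          have hyr : y r < 0 := hallneg r ⟨hr0, hr.2.le⟩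
          have hyrpos : (0:ℝ) < -(y r) := by linarith
          have hd : γ * (-(y r)) ^ ρ ≤ d r := hneg r hr0 hyr
          have hcancel : (-(y r)) ^ (1 - ρ - 1) * (-(y r)) ^ ρ = 1 := by
            rw [← Real.rpow_add hyrpos]
            norm_num
          have hb : (1 - ρ) * (-(y r)) ^ (1 - ρ - 1) * (-(d r))
              ≤ (1 - ρ) * (-(y r)) ^ (1 - ρ - 1) * (-(γ * (-(y r)) ^ ρ)) := by
            apply mul_le_mul_of_nonneg_left (by linarith)
            positivity
          have heq : (1 - ρ) * (-(y r)) ^ (1 - ρ - 1) * (-(γ * (-(y r)) ^ ρ))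
              = -(γ * (1 - ρ)) := by
            have : (1 - ρ) * (-(y r)) ^ (1 - ρ - 1) * (-(γ * (-(y r)) ^ ρ))
                = -(γ * (1 - ρ)) * ((-(y r)) ^ (1 - ρ - 1) * (-(y r)) ^ ρ) := by ring
            rw [this, hcancel, mul_one]
          linarith
      have hT0 : (0:ℝ) ∈ Set.Icc (0:ℝ) T := ⟨le_rfl, hTnn⟩
      have hTT : T ∈ Set.Icc (0:ℝ) T := ⟨hTnn, le_rfl⟩
      have hle := hwanti hT0 hTT hTnn
      have hy00 : (0:ℝ) < -(y 0) := by linarith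
      have hw0 : w 0 = γ * (1 - ρ) * T := by
        simp only [hw_def]
        rw [hT]
        have : |h (x 0)| = -(y 0) := abs_of_neg h0
        rw [this]
        field_simp
        ring
      have hyT : y T < 0 := hallneg T hTT
      have hwT : γ * (1 - ρ) * T < w T := by
        simp only [hw_def]
        have : (0:ℝ) < (-(y T)) ^ (1 - ρ) := Real.rpow_pos_of_pos (by linarith) _
        linarith
      rw [hw0] at hle
      linarith
    obtain ⟨s, hsmem, hys⟩ := hfind
    exact hinv s hsmem.1 hys t (le_trans hsmem.2 ht)
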